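/- For the Hamming weight chain of the stratified hypercube walk, E[D_{t+1}^2 − D_t^2 | H_t] = −4 H_t D_t (D_t + 1/2)/(n(n−1)) + H_t/n, where D_t = n/2 − H_t. In particular, E[D_{t+1}^2 − D_t^2 | H_t] ≤ −4 H_t D_t^2/n^2 + 2. -/

import Mathlib

/-- For the Hamming-weight chain, with `H_t = k` (`1 ≤ k ≤ n`) and
`D = n/2 - k`, the conditional drift of `D²` (where `D` increases by `1` with probability
`k(k-1)/(n(n-1))` and decreases by `1` with probability `k(n-k)/(n(n-1))`) satisfies
`E[D²_{t+1} - D²_t | H_t] = -4 k D (D + 1/2)/(n(n-1)) + k/n ≤ -4 k D²/n² + 2`. -/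
theorem drift_identity_Dsq (n k : ℕ) (hn : 2 ≤ n) (hk1 : 1 ≤ k) (hkn : k ≤ n)
    (D drift : ℝ) (hD : D = (n : ℝ) / 2 - (k : ℝ))
    (hdrift : drift = ((k : ℝ) * ((k : ℝ) - 1) / ((n : ℝ) * ((n : ℝ) - 1))) * ((D + 1) ^ 2 - D ^ 2)
      + ((k : ℝ) * ((n : ℝ) - (k : ℝ)) / ((n : ℝ) * ((n : ℝ) - 1))) * ((D - 1) ^ 2 - D ^ 2)) :
    drift = -4 * (k : ℝ) * D * (D + 1 / 2) / ((n : ℝ) * ((n : ℝ) - 1)) + (k : ℝ) / (n : ℝ)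
    ∧ drift ≤ -4 * (k : ℝ) * D ^ 2 / (n : ℝ) ^ 2 + 2 := by
  have hN2 : (2 : ℝ) ≤ (n : ℝ) := by exact_mod_cast hn
  have hx1 : (1 : ℝ) ≤ (k : ℝ) := by exact_mod_cast hk1
  have hxn : (k : ℝ) ≤ (n : ℝ) := by exact_mod_cast hkn
  have hn0 : (n : ℝ) ≠ 0 := by linarith
  have hn1 : (n : ℝ) - 1 ≠ 0 := by linarith
  have hnpos : (0 : ℝ) < (n : ℝ) := by linarith
  have hn1pos : (0 : ℝ) < (n : ℝ) - 1 := by linarith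
  constructor
  · subst hD hdrift
    field_simp
    ring
  · subst hD hdrift
    have hL : (k : ℝ) * ((k : ℝ) - 1) / ((n : ℝ) * ((n : ℝ) - 1)) *
          ((((n : ℝ) / 2 - (k : ℝ)) + 1) ^ 2 - ((n : ℝ) / 2 - (k : ℝ)) ^ 2)
        + (k : ℝ) * ((n : ℝ) - (k : ℝ)) / ((n : ℝ) * ((n : ℝ) - 1)) *
          ((((n : ℝ) / 2 - (k : ℝ)) - 1) ^ 2 - ((n : ℝ) / 2 - (k : ℝ)) ^ 2)
        = (-4 * (k : ℝ) * ((n : ℝ) / 2 - (k : ℝ)) * (((n : ℝ) / 2 - (k : ℝ)) + 1 / 2)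
            + (k : ℝ) * ((n : ℝ) - 1)) / ((n : ℝ) * ((n : ℝ) - 1)) := by
      field_simp
      ring
    have hR : -4 * (k : ℝ) * ((n : ℝ) / 2 - (k : ℝ)) ^ 2 / (n : ℝ) ^ 2 + 2
        = (-4 * (k : ℝ) * ((n : ℝ) / 2 - (k : ℝ)) ^ 2 + 2 * (n : ℝ) ^ 2) / (n : ℝ) ^ 2 := by
      field_simp
    rw [hL, hR, div_le_div_iff₀ (by positivity) (by positivity)]
    nlinarith [mul_nonneg (sub_nonneg.2 hxn) (sub_nonneg.2 hx1),
      mul_nonneg (mul_nonneg (sub_nonneg.2 hxn) (sub_nonneg.2 hx1)) hnpos.le,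
      sq_nonneg ((n:ℝ) - k), sq_nonneg ((k:ℝ) - 1), mul_pos hnpos hn1pos,
      mul_nonneg (mul_nonneg (sub_nonneg.2 hxn) hnpos.le) hn1pos.le]
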